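/- Under the same setup, if additionally h(Y) ≤ (n/2)·log(2πe(1+P)) for some P > 0, then h(Y) − h(Z) ≤ n[C^M − C^W], where C^M = (1/2)log(1+P) and C^W = (1/2)log(1+hP). -/

import Mathlib

open Real

lemma key_mono (A h t₁ t₂ : ℝ) (hA : 0 < A) (hh : 0 < h) (ht1 : 0 < t₁)
    (hle : t₁ ≤ t₂) :
    logb 2 t₁ - logb 2 (A + h * t₁) ≤ logb 2 t₂ - logb 2 (A + h * t₂) := by
  have ht2 : 0 < t₂ := lt_of_lt_of_le ht1 hle
  have hd1 : 0 < A + h * t₁ := by positivity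
  have hd2 : 0 < A + h * t₂ := by positivity
  rw [← Real.logb_div (ne_of_gt ht1) (ne_of_gt hd1),
      ← Real.logb_div (ne_of_gt ht2) (ne_of_gt hd2)]
  apply Real.logb_le_logb_of_le one_lt_two (by positivity)
  rw [div_le_div_iff₀ hd1 hd2]
  nlinarith

/-- Under the setup of the EPI lemma, if additionally
`h(Y) ≤ (n/2)·log(2πe(1+P))` for some `P > 0`, then
`h(Y) − h(Z) ≤ n[C^M − C^W]` with `C^M = (1/2)log(1+P)`, `C^W = (1/2)log(1+hP)`.
The EPI lemma is used with `ξ = h(Y)/n`: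
`h(Y) − h(Z) ≤ h(Y) − n·φ(h(Y)/n)` where
`φ(ξ) = (1/2)log(2πe(1−h+h·2^{2ξ}/(2πe)))`. -/
theorem entropy_difference_capacity_bound
    (n : ℕ) (hn : 0 < n) (h P : ℝ) (hh0 : 0 < h) (hh1 : h < 1) (hP : 0 < P)
    (hY hZ : ℝ)
    (hlemma : hY - hZ ≤ hY - n * ((1 / 2) * logb 2
      (2 * π * exp 1 * (1 - h + h * (2:ℝ) ^ (2 * (hY / n)) / (2 * π * exp 1)))))
    (hYbound : hY ≤ (n / 2) * logb 2 (2 * π * exp 1 * (1 + P))) :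
    hY - hZ ≤ n * ((1 / 2) * logb 2 (1 + P) - (1 / 2) * logb 2 (1 + h * P)) := by
  have hπ : 0 < π := pi_pos
  have hc : 0 < 2 * π * exp 1 := by positivity
  have hn' : (0:ℝ) < n := by exact_mod_cast hn
  set c := 2 * π * exp 1 with hc_def
  set ξ := hY / n with hξ
  set t₁ := (2:ℝ) ^ (2 * ξ) with ht₁def
  have ht1pos : 0 < t₁ := rpow_pos_of_pos two_pos _
  set t₂ := c * (1 + P) with ht₂def
  have ht2pos : 0 < t₂ := by positivity
  have hYeq : hY = n * ξ := by rw [hξ]; field_simp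
  have hξle : 2 * ξ ≤ logb 2 t₂ := by
    have heq : 2 * ξ = (2 * hY) / n := by rw [hξ]; ring
    rw [heq, div_le_iff₀ hn']
    nlinarith [hYbound]
  have hle : t₁ ≤ t₂ := by
    calc t₁ ≤ (2:ℝ) ^ (logb 2 t₂) :=
          Real.rpow_le_rpow_of_exponent_le one_le_two hξle
      _ = t₂ := Real.rpow_logb two_pos (by norm_num) ht2pos
  have key := key_mono (c * (1 - h)) h t₁ t₂
    (mul_pos hc (by linarith)) hh0 ht1pos hle
  have hφ1 : c * (1 - h + h * t₁ / c) = c * (1 - h) + h * t₁ := by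
    field_simp
  have hlogξ : logb 2 t₁ = 2 * ξ := Real.logb_rpow two_pos (by norm_num)
  have hlog2 : logb 2 t₂ = logb 2 c + logb 2 (1 + P) :=
    Real.logb_mul (ne_of_gt hc) (by positivity)
  have hlog3 : logb 2 (c * (1 - h) + h * t₂) = logb 2 c + logb 2 (1 + h * P) := by
    have : c * (1 - h) + h * t₂ = c * (1 + h * P) := by ring
    rw [this, Real.logb_mul (ne_of_gt hc) (by positivity)]
  have key' := mul_le_mul_of_nonneg_left key (by positivity : (0:ℝ) ≤ (n:ℝ) / 2)
  refine le_trans hlemma ?_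
  rw [hφ1, hYeq]
  nlinarith [key']
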